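/- Let h : ℝ. Define the real 4×4 matrices J := ![![0,3,0,0],![0,0,4,0],![0,0,0,3],![0,0,0,0]], K := diagonal (3,1,−1,−3), S := 1 + (h^2/2)•(J*J), T := h•J + S, T' := S − h•J, and H := S*K. Then T*T' = 1 = T'*T, and the following six matrix identities hold (writing K±c for K ± c•1): (A) (3/2)h•((T*T − 1 − 2•(T*H))*T) = −(3/2)h•( T^3*(K+1) + T*(K−1) ); (B) −(3/2)h^2•( 3•T^3 − 2•T − T' − 4•((T*H)*(T*T − 1 + T*H)*T') ) = (3/2)h^2•( T^3*((K−1)*(K+3)) + 2•(T*((K−1)*(K−1))) + T'*((K+1)*(K+1)) ); (C) −3h^3•( (15/4)•(T^3 − T'^3) − (9/4)•(T − T') − (9/2)•((T*H)*T) − 9•((T*H)*T') + (23/2)•((T*H)*T'^3) − 9•((T*H)*(T*H)*(T'^3 − T')) + 2•((T*H)*(T*H)*(T*H)*T'^3) ) = −(3/4)h^3•( T^3*((K−3)*(K+1)*(K+5)) + 3•(T*((K−3)*(K−1)*(K+1))) + 3•(T'*((K−3)*(K+1)*(K+1))) + T'^3*((K+1)*(K+3)*(K+5)) ); (D) −2h•((T*T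 − 1 + 2•(T*H))*T') = −2h•( T*(K−1) + T'*(K+1) ); (E) −(3/2)h^2•( 3•(T + 2•T' − 3•T'^3) − 4•((T*H)*(3•(T*T − 1) + T*H)*T'^3) ) = (3/2)h^2•( (T + 2•T')*((K−3)*(K+1)) + T'^3*((K+3)*(K+3)) ); (F) −(3/2)h•( (3•(T*T − 1) + 2•(T*H))*T'^3 ) = −(3/2)h•( T'*(K−3) + T'^3*(K+3) ). -/
import Mathlib


open Matrix

private lemma eq4 {α : Type*} (a00 a01 a02 a03 a10 a11 a12 a13 a20 a21 a22 a23 a30 a31 a32 a33 b00 b01 b02 b03 b10 b11 b12 b13 b20 b21 b22 b23 b30 b31 b32 b33 : α)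
    (h00 : a00 = b00) (h01 : a01 = b01) (h02 : a02 = b02) (h03 : a03 = b03) (h10 : a10 = b10) (h11 : a11 = b11) (h12 : a12 = b12) (h13 : a13 = b13) (h20 : a20 = b20) (h21 : a21 = b21) (h22 : a22 = b22) (h23 : a23 = b23) (h30 : a30 = b30) (h31 : a31 = b31) (h32 : a32 = b32) (h33 : a33 = b33) :
    (!![a00, a01, a02, a03; a10, a11, a12, a13; a20, a21, a22, a23; a30, a31, a32, a33] : Matrix (Fin 4) (Fin 4) α) = !![b00, b01, b02, b03; b10, b11, b12, b13; b20, b21, b22, b23; b30, b31, b32, b33] := by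
  subst_vars; rfl

private lemma mul4 (a00 a01 a02 a03 a10 a11 a12 a13 a20 a21 a22 a23 a30 a31 a32 a33 b00 b01 b02 b03 b10 b11 b12 b13 b20 b21 b22 b23 b30 b31 b32 b33 : ℝ) :
    (!![a00, a01, a02, a03; a10, a11, a12, a13; a20, a21, a22, a23; a30, a31, a32, a33] : Matrix (Fin 4) (Fin 4) ℝ) * !![b00, b01, b02, b03; b10, b11, b12, b13; b20, b21, b22, b23; b30, b31, b32, b33] =
    !![a00 * b00 + a01 * b10 + a02 * b20 + a03 * b30, a00 * b01 + a01 * b11 + a02 * b21 + a03 * b31, a00 * b02 + a01 * b12 + a02 * b22 + a03 * b32, a00 * b03 + a01 * b13 + a02 * b23 + a03 * b33; a10 * b00 + a11 * b10 + a12 * b20 + a13 * b30, a10 * b01 + a11 * b11 + a12 * b21 + a13 * b31, a10 * b02 + a11 * b12 + a12 * b22 + a13 * b32, a10 * b03 + a11 * b13 + a12 * b23 + a13 * b33; a20 * b00 + a21 * b10 + a22 * b20 + a23 * b30, a20 * b01 + a21 * b11 + a22 * b21 + a23 * b31, a20 * b02 + a21 * b12 + a22 * b22 + a23 * b32, a20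 * b03 + a21 * b13 + a22 * b23 + a23 * b33; a30 * b00 + a31 * b10 + a32 * b20 + a33 * b30, a30 * b01 + a31 * b11 + a32 * b21 + a33 * b31, a30 * b02 + a31 * b12 + a32 * b22 + a33 * b32, a30 * b03 + a31 * b13 + a32 * b23 + a33 * b33] := by
  ext i j; fin_cases i <;> fin_cases j <;> simp [Matrix.mul_apply, Fin.sum_univ_succ, Matrix.one_apply, Matrix.diagonal_apply, Matrix.vecHead, Matrix.vecTail] <;> ring_nf

private lemma add4 (a00 a01 a02 a03 a10 a11 a12 a13 a20 a21 a22 a23 a30 a31 a32 a33 b00 b01 b02 b03 b10 b11 b12 b13 b20 b21 b22 b23 b30 b31 b32 b33 : ℝ) :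
    (!![a00, a01, a02, a03; a10, a11, a12, a13; a20, a21, a22, a23; a30, a31, a32, a33] : Matrix (Fin 4) (Fin 4) ℝ) + !![b00, b01, b02, b03; b10, b11, b12, b13; b20, b21, b22, b23; b30, b31, b32, b33] =
    !![a00 + b00, a01 + b01, a02 + b02, a03 + b03; a10 + b10, a11 + b11, a12 + b12, a13 + b13; a20 + b20, a21 + b21, a22 + b22, a23 + b23; a30 + b30, a31 + b31, a32 + b32, a33 + b33] := by
  ext i j; fin_cases i <;> fin_cases j <;> simp [Matrix.mul_apply, Fin.sum_univ_succ, Matrix.one_apply, Matrix.diagonal_apply, Matrix.vecHead, Matrix.vecTail] <;> ring_nf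

private lemma sub4 (a00 a01 a02 a03 a10 a11 a12 a13 a20 a21 a22 a23 a30 a31 a32 a33 b00 b01 b02 b03 b10 b11 b12 b13 b20 b21 b22 b23 b30 b31 b32 b33 : ℝ) :
    (!![a00, a01, a02, a03; a10, a11, a12, a13; a20, a21, a22, a23; a30, a31, a32, a33] : Matrix (Fin 4) (Fin 4) ℝ) - !![b00, b01, b02, b03; b10, b11, b12, b13; b20, b21, b22, b23; b30, b31, b32, b33] =
    !![a00 - b00, a01 - b01, a02 - b02, a03 - b03; a10 - b10, a11 - b11, a12 - b12, a13 - b13; a20 - b20, a21 - b21, a22 - b22, a23 - b23; a30 - b30, a31 - b31, a32 - b32, a33 - b33] := by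
  ext i j; fin_cases i <;> fin_cases j <;> simp [Matrix.mul_apply, Fin.sum_univ_succ, Matrix.one_apply, Matrix.diagonal_apply, Matrix.vecHead, Matrix.vecTail] <;> ring_nf

private lemma smul4 (r : ℝ) (a00 a01 a02 a03 a10 a11 a12 a13 a20 a21 a22 a23 a30 a31 a32 a33 : ℝ) :
    r • (!![a00, a01, a02, a03; a10, a11, a12, a13; a20, a21, a22, a23; a30, a31, a32, a33] : Matrix (Fin 4) (Fin 4) ℝ) = !![r * a00, r * a01, r * a02, r * a03; r * a10, r * a11, r * a12, r * a13; r * a20, r * a21, r * a22, r * a23; r * a30, r * a31, r * a32, r * a33] := by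
  ext i j; fin_cases i <;> fin_cases j <;> simp [Matrix.mul_apply, Fin.sum_univ_succ, Matrix.one_apply, Matrix.diagonal_apply, Matrix.vecHead, Matrix.vecTail] <;> ring_nf

private lemma diag4 (a b c d : ℝ) :
    (Matrix.diagonal ![a, b, c, d] : Matrix (Fin 4) (Fin 4) ℝ) =
    !![a, 0, 0, 0; 0, b, 0, 0; 0, 0, c, 0; 0, 0, 0, d] := by
  ext i j; fin_cases i <;> fin_cases j <;> simp [Matrix.mul_apply, Fin.sum_univ_succ, Matrix.one_apply, Matrix.diagonal_apply, Matrix.vecHead, Matrix.vecTail] <;> ring_nf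

private lemma one4 : (1 : Matrix (Fin 4) (Fin 4) ℝ) = !![1, 0, 0, 0; 0, 1, 0, 0; 0, 0, 1, 0; 0, 0, 0, 1] := by
  ext i j; fin_cases i <;> fin_cases j <;> simp [Matrix.mul_apply, Fin.sum_univ_succ, Matrix.one_apply, Matrix.diagonal_apply, Matrix.vecHead, Matrix.vecTail] <;> ring_nf

private lemma three4 : (3 : Matrix (Fin 4) (Fin 4) ℝ) = !![3, 0, 0, 0; 0, 3, 0, 0; 0, 0, 3, 0; 0, 0, 0, 3] := by
  rw [← Matrix.diagonal_ofNat (n := Fin 4) (α := ℝ) 3]; ext i j; fin_cases i <;> fin_cases j <;> simp [Matrix.mul_apply, Fin.sum_univ_succ, Matrix.one_apply, Matrix.diagonal_apply, Matrix.vecHead, Matrix.vecTail] <;> ring_nf <;> norm_num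

private lemma five4 : (5 : Matrix (Fin 4) (Fin 4) ℝ) = !![5, 0, 0, 0; 0, 5, 0, 0; 0, 0, 5, 0; 0, 0, 0, 5] := by
  rw [← Matrix.diagonal_ofNat (n := Fin 4) (α := ℝ) 5]; ext i j; fin_cases i <;> fin_cases j <;> simp [Matrix.mul_apply, Fin.sum_univ_succ, Matrix.one_apply, Matrix.diagonal_apply, Matrix.vecHead, Matrix.vecTail] <;> ring_nf <;> norm_num

set_option maxHeartbeats 1000000 in
private lemma blkA (h : ℝ) (T T' H K : Matrix (Fin 4) (Fin 4) ℝ)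
    (hTdef : T = !![1, 3 * h, 6 * h ^ 2, 0; 0, 1, 4 * h, 6 * h ^ 2; 0, 0, 1, 3 * h; 0, 0, 0, 1])
    (hT'def : T' = !![1, -3 * h, 6 * h ^ 2, 0; 0, 1, -4 * h, 6 * h ^ 2; 0, 0, 1, -3 * h; 0, 0, 0, 1])
    (hHdef : H = !![3, 0, -6 * h ^ 2, 0; 0, 1, 0, -18 * h ^ 2; 0, 0, -1, 0; 0, 0, 0, -3])
    (hKdef : K = Matrix.diagonal ![3, 1, -1, -3]) :
    (3 / 2 * h) • ((T * T - 1 - (2 : ℝ) • (T * H)) * T) = (-(3 / 2 * h)) • (T ^ 3 * (K + 1) + T * (K - 1)) := by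
  subst hTdef hT'def hHdef hKdef
  simp only [pow_succ, pow_zero, one_mul, pow_one, diag4, one4, three4, five4, mul4, add4, sub4, smul4]
  apply eq4 <;> ring

set_option maxHeartbeats 1000000 in
private lemma blkB (h : ℝ) (T T' H K : Matrix (Fin 4) (Fin 4) ℝ)
    (hTdef : T = !![1, 3 * h, 6 * h ^ 2, 0; 0, 1, 4 * h, 6 * h ^ 2; 0, 0, 1, 3 * h; 0, 0, 0, 1])
    (hT'def : T' = !![1, -3 * h, 6 * h ^ 2, 0; 0, 1, -4 * h, 6 * h ^ 2; 0, 0, 1, -3 * h; 0, 0, 0, 1])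
    (hHdef : H = !![3, 0, -6 * h ^ 2, 0; 0, 1, 0, -18 * h ^ 2; 0, 0, -1, 0; 0, 0, 0, -3])
    (hKdef : K = Matrix.diagonal ![3, 1, -1, -3]) :
    (-(3 / 2 * h ^ 2)) • ((3 : ℝ) • T ^ 3 - (2 : ℝ) • T - T' - (4 : ℝ) • ((T * H) * (T * T - 1 + T * H) * T')) = (3 / 2 * h ^ 2) • (T ^ 3 * ((K - 1) * (K + 3)) + (2 : ℝ) • (T * ((K - 1) * (K - 1))) + T' * ((K + 1) * (K + 1))) := by
  subst hTdef hT'def hHdef hKdef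
  simp only [pow_succ, pow_zero, one_mul, pow_one, diag4, one4, three4, five4, mul4, add4, sub4, smul4]
  apply eq4 <;> ring

set_option maxHeartbeats 10000000 in
private lemma blkC (h : ℝ) (T T' H K : Matrix (Fin 4) (Fin 4) ℝ)
    (hTdef : T = !![1, 3 * h, 6 * h ^ 2, 0; 0, 1, 4 * h, 6 * h ^ 2; 0, 0, 1, 3 * h; 0, 0, 0, 1])
    (hT'def : T' = !![1, -3 * h, 6 * h ^ 2, 0; 0, 1, -4 * h, 6 * h ^ 2; 0, 0, 1, -3 * h; 0, 0, 0, 1])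
    (hHdef : H = !![3, 0, -6 * h ^ 2, 0; 0, 1, 0, -18 * h ^ 2; 0, 0, -1, 0; 0, 0, 0, -3])
    (hKdef : K = Matrix.diagonal ![3, 1, -1, -3]) :
    (-(3 * h ^ 3)) • ((15 / 4 : ℝ) • (T ^ 3 - T' ^ 3) - (9 / 4 : ℝ) • (T - T') - (9 / 2 : ℝ) • ((T * H) * T) - (9 : ℝ) • ((T * H) * T') + (23 / 2 : ℝ) • ((T * H) * T' ^ 3) - (9 : ℝ) • ((T * H) * (T * H) * (T' ^ 3 - T')) + (2 : ℝ) • ((T * H) * (T * H) * (T * H) * T' ^ 3)) = (-(3 / 4 * h ^ 3)) • (T ^ 3 * ((K - 3) * (K + 1) * (K + 5)) + (3 : ℝ) • (T * ((K - 3) * (K - 1) * (K + 1))) + (3 : ℝ) • (T' * ((K - 3) * (K + 1) * (K + 1))) + T' ^ 3 * ((K + 1) * (K + 3) * (K + 5))) := by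
  subst hTdef hT'def hHdef hKdef
  simp only [pow_succ, pow_zero, one_mul, pow_one, diag4, one4, three4, five4, mul4, add4, sub4, smul4]
  apply eq4 <;> ring

set_option maxHeartbeats 1000000 in
private lemma blkD (h : ℝ) (T T' H K : Matrix (Fin 4) (Fin 4) ℝ)
    (hTdef : T = !![1, 3 * h, 6 * h ^ 2, 0; 0, 1, 4 * h, 6 * h ^ 2; 0, 0, 1, 3 * h; 0, 0, 0, 1])
    (hT'def : T' = !![1, -3 * h, 6 * h ^ 2, 0; 0, 1, -4 * h, 6 * h ^ 2; 0, 0, 1, -3 * h; 0, 0, 0, 1])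
    (hHdef : H = !![3, 0, -6 * h ^ 2, 0; 0, 1, 0, -18 * h ^ 2; 0, 0, -1, 0; 0, 0, 0, -3])
    (hKdef : K = Matrix.diagonal ![3, 1, -1, -3]) :
    (-(2 * h)) • ((T * T - 1 + (2 : ℝ) • (T * H)) * T') = (-(2 * h)) • (T * (K - 1) + T' * (K + 1)) := by
  subst hTdef hT'def hHdef hKdef
  simp only [pow_succ, pow_zero, one_mul, pow_one, diag4, one4, three4, five4, mul4, add4, sub4, smul4]
  apply eq4 <;> ring

set_option maxHeartbeats 1000000 in
private lemma blkE (h : ℝ) (T T' H K : Matrix (Fin 4) (Fin 4) ℝ)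
    (hTdef : T = !![1, 3 * h, 6 * h ^ 2, 0; 0, 1, 4 * h, 6 * h ^ 2; 0, 0, 1, 3 * h; 0, 0, 0, 1])
    (hT'def : T' = !![1, -3 * h, 6 * h ^ 2, 0; 0, 1, -4 * h, 6 * h ^ 2; 0, 0, 1, -3 * h; 0, 0, 0, 1])
    (hHdef : H = !![3, 0, -6 * h ^ 2, 0; 0, 1, 0, -18 * h ^ 2; 0, 0, -1, 0; 0, 0, 0, -3])
    (hKdef : K = Matrix.diagonal ![3, 1, -1, -3]) :
    (-(3 / 2 * h ^ 2)) • ((3 : ℝ) • (T + (2 : ℝ) • T' - (3 : ℝ) • T' ^ 3) - (4 : ℝ) • ((T * H) * ((3 : ℝ) • (T * T - 1) + T * H) * T' ^ 3)) = (3 / 2 * h ^ 2) • ((T + (2 : ℝ) • T') * ((K - 3) * (K + 1)) + T' ^ 3 * ((K + 3) * (K + 3))) := by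
  subst hTdef hT'def hHdef hKdef
  simp only [pow_succ, pow_zero, one_mul, pow_one, diag4, one4, three4, five4, mul4, add4, sub4, smul4]
  apply eq4 <;> ring

set_option maxHeartbeats 1000000 in
private lemma blkF (h : ℝ) (T T' H K : Matrix (Fin 4) (Fin 4) ℝ)
    (hTdef : T = !![1, 3 * h, 6 * h ^ 2, 0; 0, 1, 4 * h, 6 * h ^ 2; 0, 0, 1, 3 * h; 0, 0, 0, 1])
    (hT'def : T' = !![1, -3 * h, 6 * h ^ 2, 0; 0, 1, -4 * h, 6 * h ^ 2; 0, 0, 1, -3 * h; 0, 0, 0, 1])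
    (hHdef : H = !![3, 0, -6 * h ^ 2, 0; 0, 1, 0, -18 * h ^ 2; 0, 0, -1, 0; 0, 0, 0, -3])
    (hKdef : K = Matrix.diagonal ![3, 1, -1, -3]) :
    (-(3 / 2 * h)) • (((3 : ℝ) • (T * T - 1) + (2 : ℝ) • (T * H)) * T' ^ 3) = (-(3 / 2 * h)) • (T' * (K - 3) + T' ^ 3 * (K + 3)) := by
  subst hTdef hT'def hHdef hKdef
  simp only [pow_succ, pow_zero, one_mul, pow_one, diag4, one4, three4, five4, mul4, add4, sub4, smul4]
  apply eq4 <;> ring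

set_option maxHeartbeats 1000000 in
/-- In the spin-3/2 representation, the off-diagonal blocks of the matrix `R_h^{3/2;j}` read
from the Jordanian universal R-matrix (left-hand sides) coincide with the corresponding
blocks of the contracted matrix `R̃_h^{3/2;j}` (right-hand sides), together with the
invertibility `T T' = 1 = T' T`. -/
theorem contracted_R_three_half_j_equals_Rh_three_half_j (h : ℝ)
    (J K S T T' H : Matrix (Fin 4) (Fin 4) ℝ)
    (hJ : J = !![0, 3, 0, 0; 0, 0, 4, 0; 0, 0, 0, 3; 0, 0, 0, 0])
    (hK : K = Matrix.diagonal ![3, 1, -1, -3])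
    (hS : S = 1 + (h ^ 2 / 2) • (J * J))
    (hT : T = h • J + S)
    (hT' : T' = S - h • J)
    (hH : H = S * K) :
    T * T' = 1 ∧ T' * T = 1 ∧
    -- (A)
    ((3 / 2 * h) • ((T * T - 1 - (2 : ℝ) • (T * H)) * T) =
      (-(3 / 2 * h)) • (T ^ 3 * (K + 1) + T * (K - 1))) ∧
    -- (B)
    ((-(3 / 2 * h ^ 2)) • ((3 : ℝ) • T ^ 3 - (2 : ℝ) • T - T'
        - (4 : ℝ) • ((T * H) * (T * T - 1 + T * H) * T')) =
      (3 / 2 * h ^ 2) • (T ^ 3 * ((K - 1) * (K + 3)) + (2 : ℝ) • (T * ((K - 1) * (K - 1)))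
        + T' * ((K + 1) * (K + 1)))) ∧
    -- (C)
    ((-(3 * h ^ 3)) • ((15 / 4 : ℝ) • (T ^ 3 - T' ^ 3) - (9 / 4 : ℝ) • (T - T')
        - (9 / 2 : ℝ) • ((T * H) * T) - (9 : ℝ) • ((T * H) * T')
        + (23 / 2 : ℝ) • ((T * H) * T' ^ 3)
        - (9 : ℝ) • ((T * H) * (T * H) * (T' ^ 3 - T'))
        + (2 : ℝ) • ((T * H) * (T * H) * (T * H) * T' ^ 3)) =
      (-(3 / 4 * h ^ 3)) • (T ^ 3 * ((K - 3) * (K + 1) * (K + 5))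
        + (3 : ℝ) • (T * ((K - 3) * (K - 1) * (K + 1)))
        + (3 : ℝ) • (T' * ((K - 3) * (K + 1) * (K + 1)))
        + T' ^ 3 * ((K + 1) * (K + 3) * (K + 5)))) ∧
    -- (D)
    ((-(2 * h)) • ((T * T - 1 + (2 : ℝ) • (T * H)) * T') =
      (-(2 * h)) • (T * (K - 1) + T' * (K + 1))) ∧
    -- (E)
    ((-(3 / 2 * h ^ 2)) • ((3 : ℝ) • (T + (2 : ℝ) • T' - (3 : ℝ) • T' ^ 3)
        - (4 : ℝ) • ((T * H) * ((3 : ℝ) • (T * T - 1) + T * H) * T' ^ 3)) =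
      (3 / 2 * h ^ 2) • ((T + (2 : ℝ) • T') * ((K - 3) * (K + 1))
        + T' ^ 3 * ((K + 3) * (K + 3)))) ∧
    -- (F)
    ((-(3 / 2 * h)) • (((3 : ℝ) • (T * T - 1) + (2 : ℝ) • (T * H)) * T' ^ 3) =
      (-(3 / 2 * h)) • (T' * (K - 3) + T' ^ 3 * (K + 3))) := by
  have hTe : T = !![1, 3 * h, 6 * h ^ 2, 0; 0, 1, 4 * h, 6 * h ^ 2; 0, 0, 1, 3 * h; 0, 0, 0, 1] := by
    rw [hT, hS, hJ]; simp only [pow_succ, pow_zero, one_mul, pow_one, diag4, one4, three4, five4, mul4, add4, sub4, smul4]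
    apply eq4 <;> ring
  have hT'e : T' = !![1, -3 * h, 6 * h ^ 2, 0; 0, 1, -4 * h, 6 * h ^ 2; 0, 0, 1, -3 * h; 0, 0, 0, 1] := by
    rw [hT', hS, hJ]; simp only [pow_succ, pow_zero, one_mul, pow_one, diag4, one4, three4, five4, mul4, add4, sub4, smul4]
    apply eq4 <;> ring
  have hHe : H = !![3, 0, -6 * h ^ 2, 0; 0, 1, 0, -18 * h ^ 2; 0, 0, -1, 0; 0, 0, 0, -3] := by
    rw [hH, hS, hJ, hK]; simp only [pow_succ, pow_zero, one_mul, pow_one, diag4, one4, three4, five4, mul4, add4, sub4, smul4]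
    apply eq4 <;> ring
  refine ⟨?_, ?_, blkA h T T' H K hTe hT'e hHe hK, blkB h T T' H K hTe hT'e hHe hK,
    blkC h T T' H K hTe hT'e hHe hK, blkD h T T' H K hTe hT'e hHe hK,
    blkE h T T' H K hTe hT'e hHe hK, blkF h T T' H K hTe hT'e hHe hK⟩
  · rw [hTe, hT'e]; simp only [pow_succ, pow_zero, one_mul, pow_one, diag4, one4, three4, five4, mul4, add4, sub4, smul4]
    apply eq4 <;> ring
  · rw [hTe, hT'e]; simp only [pow_succ, pow_zero, one_mul, pow_one, diag4, one4, three4, five4, mul4, add4, sub4, smul4]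
    apply eq4 <;> ring
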